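/- Let n ≥ 2 and suppose A, B ∈ ℂ^{n×n} satisfy: (i) the (n−1)×(n−1) submatrices A₁ and B₁ obtained by deleting the first row and column are equal and non-derogatory; (ii) the first-column vectors (a_{2,1},…,a_{n,1}) and (b_{2,1},…,b_{n,1}) are equal and form a cyclic vector of A₁; (iii) π_n(A) = π_n(B). Then the first rows of A and B coincide: (a_{1,1},…,a_{1,n}) = (b_{1,1},…,b_{1,n}); in particular A = B. -/

import Mathlib

open Matrix BigOperators

/-- Determinant of the principal submatrix of `A` indexed by `s`. -/
noncomputable def subDet {m : ℕ} (A : Matrix (Fin m) (Fin m) ℂ) (s : Finset (Fin m)) : ℂ :=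
  Matrix.det (A.submatrix (fun i : {a : Fin m // a ∈ s} => (i : Fin m))
    (fun i : {a : Fin m // a ∈ s} => (i : Fin m)))

/-- `piX A j` = sum of dets of `j × j` principal submatrices whose index set contains 0. -/
noncomputable def piX {m : ℕ} [NeZero m] (A : Matrix (Fin m) (Fin m) ℂ) (j : ℕ) : ℂ :=
  ∑ s ∈ Finset.univ.filter (fun s : Finset (Fin m) => s.card = j ∧ (0 : Fin m) ∈ s),
    subDet A s

/-- `piY A j` = sum of dets of `j × j` principal submatrices whose index set avoids 0. -/
noncomputable def piY {m : ℕ} [NeZero m] (A : Matrix (Fin m) (Fin m) ℂ) (j : ℕ) : ℂ :=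
  ∑ s ∈ Finset.univ.filter (fun s : Finset (Fin m) => s.card = j ∧ (0 : Fin m) ∉ s),
    subDet A s

/-- `v` is a cyclic vector of `X`: the iterates `v, Xv, X²v, …` span the whole space. -/
def IsCyclicVec {m : ℕ} (X : Matrix (Fin m) (Fin m) ℂ) (v : Fin m → ℂ) : Prop :=
  Submodule.span ℂ (Set.range fun k : ℕ => (X ^ k) *ᵥ v) = ⊤

lemma finset_sum_mulVec {α : Type*} {m : ℕ} (s : Finset α) (f : α → Matrix (Fin m) (Fin m) ℂ)
    (v : Fin m → ℂ) : (∑ a ∈ s, f a) *ᵥ v = ∑ a ∈ s, f a *ᵥ v := by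
  classical
  induction s using Finset.induction_on with
  | empty => simp [Matrix.zero_mulVec]
  | insert _ _ ha ih => rw [Finset.sum_insert ha, Finset.sum_insert ha, Matrix.add_mulVec, ih]

lemma dot_sum {α : Type*} {m : ℕ} (s : Finset α) (f : α → (Fin m → ℂ)) (u : Fin m → ℂ) :
    u ⬝ᵥ (∑ a ∈ s, f a) = ∑ a ∈ s, u ⬝ᵥ f a := by
  classical
  induction s using Finset.induction_on with
  | empty => simp
  | insert _ _ ha ih => rw [Finset.sum_insert ha, Finset.sum_insert ha, dotProduct_add, ih]

lemma dot_smul_mulVec {m : ℕ} (a : ℂ) (M : Matrix (Fin m) (Fin m) ℂ) (u v : Fin m → ℂ) :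
    u ⬝ᵥ ((a • M) *ᵥ v) = a * (u ⬝ᵥ (M *ᵥ v)) := by
  rw [Matrix.smul_mulVec, dotProduct_smul, smul_eq_mul]

lemma detMixed {N : ℕ} (M : Matrix (Fin N) (Fin N) ℂ) (s : Finset (Fin N)) :
    Matrix.det (Matrix.of fun i j =>
        if i ∈ s then M i j else (1 : Matrix (Fin N) (Fin N) ℂ) i j) = subDet M s := by
  classical
  set P := Matrix.of fun i j =>
    if i ∈ s then M i j else (1 : Matrix (Fin N) (Fin N) ℂ) i j with hP
  let e : {a : Fin N // a ∈ s} ⊕ {a : Fin N // ¬ a ∈ s} ≃ Fin N := Equiv.sumCompl _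
  rw [← Matrix.det_submatrix_equiv_self e P]
  have hblock : P.submatrix e e = Matrix.fromBlocks
      (M.submatrix (fun i : {a : Fin N // a ∈ s} => (i : Fin N))
        (fun i : {a : Fin N // a ∈ s} => (i : Fin N)))
      (M.submatrix (fun i : {a : Fin N // a ∈ s} => (i : Fin N))
        (fun i : {a : Fin N // ¬ a ∈ s} => (i : Fin N)))
      0 1 := by
    ext i j
    rcases i with i | i <;> rcases j with j | j
    · simp [P, e, Matrix.one_apply, i.2]
    · simp [P, e, Matrix.one_apply, i.2]
    · have : (i : Fin N) ≠ (j : Fin N) := by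
        intro h; exact i.2 (h ▸ j.2)
      simp [P, e, Matrix.one_apply, i.2, this]
    · by_cases h : i = j
      · subst h; simp [P, e, Matrix.one_apply, i.2]
      · have : (i : Fin N) ≠ (j : Fin N) := fun hh => h (Subtype.ext hh)
        simp [P, e, Matrix.one_apply, i.2, this, h]
  rw [hblock, Matrix.det_fromBlocks_zero₂₁, Matrix.det_one, mul_one]
  rfl

lemma det_smul_one_add {N : ℕ} (M : Matrix (Fin N) (Fin N) ℂ) (t : ℂ) :
    Matrix.det (t • 1 + M) = ∑ s : Finset (Fin N), subDet M s * t ^ (N - s.card) := by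
  classical
  have h0 : Matrix.det (t • 1 + M)
      = (Matrix.detRowAlternating : AlternatingMap ℂ (Fin N → ℂ) ℂ (Fin N)).toMultilinearMap
        ((fun i => t • (1 : Matrix (Fin N) (Fin N) ℂ) i) + fun i => M i) := rfl
  rw [h0, MultilinearMap.map_add_univ]
  have key : ∀ s : Finset (Fin N),
      (Matrix.detRowAlternating : AlternatingMap ℂ (Fin N → ℂ) ℂ (Fin N)).toMultilinearMap
        (s.piecewise (fun i => t • (1 : Matrix (Fin N) (Fin N) ℂ) i) (fun i => M i))
      = t ^ s.card * subDet M sᶜ := by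
    intro s
    have hpiece : s.piecewise (fun i => t • (1 : Matrix (Fin N) (Fin N) ℂ) i) (fun i => M i)
        = s.piecewise (fun i => t • (s.piecewise (fun i => (1 : Matrix (Fin N) (Fin N) ℂ) i)
            (fun i => M i)) i) (s.piecewise (fun i => (1 : Matrix (Fin N) (Fin N) ℂ) i)
            (fun i => M i)) := by
      funext i
      by_cases hi : i ∈ s <;>
        simp [Finset.piecewise_eq_of_mem _ _ _, Finset.piecewise_eq_of_notMem, hi]
    rw [hpiece, MultilinearMap.map_piecewise_smul, Finset.prod_const]
    have hdet : (Matrix.detRowAlternating : AlternatingMap ℂ (Fin N → ℂ) ℂ (Fin N)).toMultilinearMap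
        (s.piecewise (fun i => (1 : Matrix (Fin N) (Fin N) ℂ) i) (fun i => M i))
        = subDet M sᶜ := by
      have : (s.piecewise (fun i => (1 : Matrix (Fin N) (Fin N) ℂ) i) (fun i => M i))
          = Matrix.of (fun i j => if i ∈ sᶜ then M i j else (1 : Matrix (Fin N) (Fin N) ℂ) i j) := by
        funext i j
        by_cases hi : i ∈ s <;>
          simp [Finset.piecewise_eq_of_mem, Finset.piecewise_eq_of_notMem, hi,
            Finset.mem_compl, Matrix.of_apply]
      rw [this]
      exact detMixed M sᶜ
    rw [hdet, smul_eq_mul]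
  rw [Finset.sum_congr rfl fun s _ => key s]
  have hbij := Function.Involutive.bijective (compl_involutive (α := Finset (Fin N)))
  refine Fintype.sum_bijective (fun s : Finset (Fin N) => sᶜ) hbij _ _ ?_
  intro s
  have hcard : (sᶜ : Finset (Fin N)).card = N - s.card := by
    rw [Finset.card_compl, Fintype.card_fin]
  have hle : s.card ≤ N := by
    simpa [Fintype.card_fin] using Finset.card_le_univ s
  rw [hcard, Nat.sub_sub_self hle, mul_comm]


lemma det_t_eq {N : ℕ} [NeZero N] (A B : Matrix (Fin N) (Fin N) ℂ)
    (hrows : ∀ i j, i ≠ 0 → A i j = B i j)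
    (hpiX : ∀ j, piX A j = piX B j) (t : ℂ) :
    (t • 1 + A).det = (t • 1 + B).det := by
  classical
  rw [det_smul_one_add, det_smul_one_add]
  rw [← Finset.sum_filter_add_sum_filter_not Finset.univ (fun s : Finset (Fin N) => (0 : Fin N) ∈ s),
      ← Finset.sum_filter_add_sum_filter_not Finset.univ (fun s : Finset (Fin N) => (0 : Fin N) ∈ s)]
  have key : ∀ C : Matrix (Fin N) (Fin N) ℂ,
      ∑ s ∈ Finset.univ.filter (fun s : Finset (Fin N) => (0 : Fin N) ∈ s),
        subDet C s * t ^ (N - s.card)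
      = ∑ j ∈ Finset.range (N + 1), piX C j * t ^ (N - j) := by
    intro C
    rw [← Finset.sum_fiberwise_of_maps_to (g := fun s : Finset (Fin N) => s.card)
      (fun s _ => Finset.mem_range.mpr (Nat.lt_succ_of_le (by
        simpa [Fintype.card_fin] using Finset.card_le_univ s)))
      (fun s => subDet C s * t ^ (N - s.card))]
    apply Finset.sum_congr rfl
    intro j _
    have hset : (Finset.univ.filter (fun s : Finset (Fin N) => (0 : Fin N) ∈ s)).filter
        (fun s => s.card = j)
        = Finset.univ.filter (fun s : Finset (Fin N) => s.card = j ∧ (0 : Fin N) ∈ s) := by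
      rw [Finset.filter_filter]
      apply Finset.filter_congr
      intro s _
      tauto
    rw [hset, piX, Finset.sum_mul]
    apply Finset.sum_congr rfl
    intro s hs
    rw [(Finset.mem_filter.mp hs).2.1]
  rw [key A, key B]
  congr 1
  · exact Finset.sum_congr rfl fun j _ => by rw [hpiX]
  · apply Finset.sum_congr rfl
    intro s hs
    have h0 : (0 : Fin N) ∉ s := by simpa using (Finset.mem_filter.mp hs).2
    have : subDet A s = subDet B s := by
      unfold subDet
      congr 1
      ext i j
      exact hrows _ _ (fun h => h0 (h ▸ i.2))
    rw [this]

lemma piX_one {N : ℕ} [NeZero N] (A : Matrix (Fin N) (Fin N) ℂ) : piX A 1 = A 0 0 := by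
  classical
  have hset : Finset.univ.filter (fun s : Finset (Fin N) => s.card = 1 ∧ (0 : Fin N) ∈ s)
      = {({0} : Finset (Fin N))} := by
    ext s
    simp only [Finset.mem_filter, Finset.mem_univ, true_and, Finset.mem_singleton]
    constructor
    · rintro ⟨hcard, h0⟩
      obtain ⟨a, rfl⟩ := Finset.card_eq_one.mp hcard
      rw [Finset.mem_singleton] at h0
      rw [← h0]
    · rintro rfl
      exact ⟨Finset.card_singleton _, Finset.mem_singleton_self _⟩
  rw [piX, hset, Finset.sum_singleton]
  haveI : Unique {a : Fin N // a ∈ ({0} : Finset (Fin N))} :=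
    ⟨⟨⟨0, Finset.mem_singleton_self 0⟩⟩, by
      rintro ⟨a, ha⟩
      exact Subtype.ext (by simpa [Finset.mem_singleton] using ha)⟩
  rw [subDet, Matrix.det_unique]
  simp only [Matrix.submatrix_apply]
  have hd : ((default : {a : Fin N // a ∈ ({0} : Finset (Fin N))}) : Fin N) = 0 :=
    Finset.mem_singleton.mp (default : {a : Fin N // a ∈ ({0} : Finset (Fin N))}).2
  rw [hd]


lemma neg_one_sq_pow (j : ℕ) : ((-1 : ℂ)) ^ j * ((-1 : ℂ)) ^ j = 1 := by
  rw [← pow_add]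
  exact Even.neg_one_pow ⟨j, rfl⟩

lemma minor_det {n : ℕ} (A : Matrix (Fin (n+2)) (Fin (n+2)) ℂ) (t : ℂ) (j : Fin (n+1)) :
    ((t • (1 : Matrix (Fin (n+2)) (Fin (n+2)) ℂ) + A).submatrix Fin.succ
        (Fin.succ j).succAbove).det
      = (-1 : ℂ) ^ (j : ℕ) *
        (((t • (1 : Matrix (Fin (n+1)) (Fin (n+1)) ℂ) +
            Matrix.of fun a b : Fin (n+1) => A a.succ b.succ).updateCol j
          (fun i => A i.succ 0)).det) := by
  set D : Matrix (Fin (n+1)) (Fin (n+1)) ℂ :=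
    t • (1 : Matrix (Fin (n+1)) (Fin (n+1)) ℂ) + Matrix.of fun a b : Fin (n+1) => A a.succ b.succ with hD
  set v : Fin (n+1) → ℂ := fun i => A i.succ 0 with hv
  set E : Matrix (Fin (n+1)) (Fin (n+1)) ℂ :=
    (t • (1 : Matrix (Fin (n+2)) (Fin (n+2)) ℂ) + A).submatrix Fin.succ
      (Fin.succ j).succAbove with hE
  rw [Matrix.det_succ_column E 0, Matrix.det_succ_column (D.updateCol j v) j,
    Finset.mul_sum]
  apply Finset.sum_congr rfl
  intro i _
  have hE0 : E i 0 = v i := by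
    have hsa : (Fin.succ j).succAbove 0 = 0 := Fin.succ_succAbove_zero j
    simp only [hE, Matrix.submatrix_apply, hsa, Matrix.add_apply, Matrix.smul_apply,
      Matrix.one_apply, hv]
    rw [if_neg (Fin.succ_ne_zero i)]
    simp
  have hupd : (D.updateCol j v) i j = v i := Matrix.updateCol_self
  have hsub : E.submatrix i.succAbove (0 : Fin (n+1)).succAbove
      = (D.updateCol j v).submatrix i.succAbove j.succAbove := by
    ext a b
    have hne : j.succAbove b ≠ j := Fin.succAbove_ne j b
    simp only [Matrix.submatrix_apply, hE, Fin.zero_succAbove,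
      Matrix.updateCol_apply, if_neg hne]
    rw [Fin.succ_succAbove_succ]
    simp only [hD, Matrix.add_apply, Matrix.smul_apply, Matrix.one_apply, Matrix.of_apply]
    congr 1
    simp [Fin.succ_inj]
  rw [hE0, hupd, hsub]
  ring_nf
  try rw [show (((0 : Fin (n+1))) : ℕ) = 0 from rfl, pow_zero, mul_one]
  try rw [show ((-1 : ℂ)) ^ ((j : ℕ) * 2) = 1 from Even.neg_one_pow ⟨(j : ℕ), by ring⟩, mul_one]


lemma sum_swap_tri {M : Type*} [AddCommMonoid M] (m : ℕ) (F : ℕ → ℕ → M) :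
    ∑ k ∈ Finset.range (m+2), ∑ i ∈ Finset.range (m+1-k), F k i
      = ∑ j ∈ Finset.range (m+2), ∑ k ∈ Finset.range j, F k (j-1-k) := by
  have h1 : ∀ k ∈ Finset.range (m+2),
      ∑ i ∈ Finset.range (m+1-k), F k i
        = ∑ j ∈ Finset.Ico (k+1) (m+2), F k (j-1-k) := by
    intro k hk
    rw [Finset.sum_Ico_eq_sum_range]
    have h2 : m + 2 - (k+1) = m + 1 - k := by omega
    rw [h2]
    apply Finset.sum_congr rfl
    intro i _
    congr 1
    omega
  rw [Finset.sum_congr rfl h1]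
  exact Finset.sum_comm' (fun k j => by
    simp only [Finset.mem_range, Finset.mem_Ico]
    omega)

lemma key_identity {m : ℕ} (X : Matrix (Fin (m+1)) (Fin (m+1)) ℂ) (t : ℂ) :
    (t • 1 + X) * (∑ k ∈ Finset.range (m+2), t^k •
        (∑ i ∈ Finset.range (m+1-k), ((-X).charpoly.coeff (k+1+i)) • (-X)^i))
      = ((-X).charpoly.eval t) • 1 := by
  set c : ℕ → ℂ := fun j => (-X).charpoly.coeff j with hc
  have hstep : ∀ k : ℕ,
      (t • 1 + X) * (t^k • (∑ i ∈ Finset.range (m+1-k), c (k+1+i) • (-X)^i))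
        = ∑ i ∈ Finset.range (m+1-k),
            c (k+1+i) • (t^(k+1) • (-X)^i - t^k • (-X)^(i+1)) := by
    intro k
    rw [Matrix.mul_smul, Matrix.mul_sum, Finset.smul_sum]
    apply Finset.sum_congr rfl
    intro i _
    have hXi : X * ((-X)^i) = -((-X)^(i+1)) := by
      rw [pow_succ', neg_mul, neg_neg]
    rw [Matrix.mul_smul, add_mul, Matrix.smul_mul, one_mul, hXi, pow_succ']
    module
  rw [Matrix.mul_sum, Finset.sum_congr rfl fun k _ => hstep k, sum_swap_tri]
  have hinner : ∀ j ∈ Finset.range (m+2),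
      (∑ k ∈ Finset.range j, c (k+1+(j-1-k)) • (t^(k+1) • (-X)^(j-1-k) - t^k • (-X)^(j-1-k+1)))
        = c j • (t^j • (1 : Matrix (Fin (m+1)) (Fin (m+1)) ℂ) - (-X)^j) := by
    intro j _
    have hcongr : ∀ k ∈ Finset.range j,
        c (k+1+(j-1-k)) • (t^(k+1) • (-X)^(j-1-k) - t^k • (-X)^(j-1-k+1))
          = c j • ((fun l => t^l • (-X)^(j-l)) (k+1) - (fun l => t^l • (-X)^(j-l)) k) := by
      intro k hk
      have hk' : k < j := Finset.mem_range.mp hk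
      have h1 : k + 1 + (j-1-k) = j := by omega
      have h3 : j - 1 - k + 1 = j - k := by omega
      have h2 : j - 1 - k = j - (k+1) := by omega
      simp only []
      rw [h1, h3, h2]
    rw [Finset.sum_congr rfl hcongr, ← Finset.smul_sum,
      Finset.sum_range_sub (fun l => t^l • (-X)^(j-l))]
    simp only [Nat.sub_self, Nat.sub_zero, pow_zero, one_smul]
  rw [Finset.sum_congr rfl hinner]
  have hsplit : ∑ j ∈ Finset.range (m+2),
      c j • (t^j • (1 : Matrix (Fin (m+1)) (Fin (m+1)) ℂ) - (-X)^j)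
      = (∑ j ∈ Finset.range (m+2), (c j * t^j)) • (1 : Matrix (Fin (m+1)) (Fin (m+1)) ℂ)
        - ∑ j ∈ Finset.range (m+2), c j • (-X)^j := by
    rw [Finset.sum_smul, ← Finset.sum_sub_distrib]
    apply Finset.sum_congr rfl
    intro j _
    rw [smul_sub, smul_smul]
  rw [hsplit]
  have hdeg : (-X).charpoly.natDegree < m + 2 := by
    rw [Matrix.charpoly_natDegree_eq_dim, Fintype.card_fin]
    omega
  have hCH : ∑ j ∈ Finset.range (m+2), c j • (-X)^j = 0 := by
    have := Matrix.aeval_self_charpoly (-X)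
    rwa [Polynomial.aeval_eq_sum_range' hdeg] at this
  have heval : (-X).charpoly.eval t = ∑ j ∈ Finset.range (m+2), c j * t^j :=
    Polynomial.eval_eq_sum_range' hdeg t
  rw [hCH, sub_zero, heval]


lemma u_eq_zero {m : ℕ} (X : Matrix (Fin (m+1)) (Fin (m+1)) ℂ) (u v : Fin (m+1) → ℂ)
    (hcyc : Submodule.span ℂ (Set.range fun k : ℕ => (X ^ k) *ᵥ v) = ⊤)
    (h : ∀ t : ℂ, u ⬝ᵥ Matrix.cramer (t • 1 + X) v = 0) : u = 0 := by
  classical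
  set c : ℕ → ℂ := fun j => (-X).charpoly.coeff j with hc
  set Mk : ℕ → Matrix (Fin (m+1)) (Fin (m+1)) ℂ :=
    fun k => ∑ i ∈ Finset.range (m+1-k), c (k+1+i) • (-X)^i with hMk
  set St : ℂ → Matrix (Fin (m+1)) (Fin (m+1)) ℂ :=
    fun s => ∑ k ∈ Finset.range (m+2), s^k • Mk k with hSt'
  have hdeg' : (-X).charpoly.natDegree = m+1 := by
    rw [Matrix.charpoly_natDegree_eq_dim, Fintype.card_fin]
  have hdeg : (-X).charpoly.natDegree < m + 2 := by omega
  have hnegpow : ∀ j : ℕ, (-X)^j = ((-1:ℂ)^j) • X^j := by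
    intro j
    rw [← neg_one_smul ℂ X, _root_.smul_pow]
  -- determinant of t•1+X
  have hdet : ∀ s : ℂ, (s • (1 : Matrix (Fin (m+1)) (Fin (m+1)) ℂ) + X).det
      = (-X).charpoly.eval s := by
    intro s
    have h2 : (Polynomial.evalRingHom s).mapMatrix (Matrix.charmatrix (-X))
        = s • (1 : Matrix (Fin (m+1)) (Fin (m+1)) ℂ) + X := by
      ext i j
      by_cases hij : i = j
      · subst hij
        simp [RingHom.mapMatrix_apply, Matrix.charmatrix_apply_eq, Matrix.one_apply]
      · simp [RingHom.mapMatrix_apply, Matrix.charmatrix_apply_ne _ _ _ hij,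
          Matrix.one_apply, hij]
    rw [Matrix.charpoly, ← Polynomial.coe_evalRingHom, RingHom.map_det, h2]
  -- cramer equals our polynomial adjugate applied to v
  have hScr : ∀ s : ℂ, (-X).charpoly.eval s ≠ 0 →
      Matrix.cramer (s • 1 + X) v = (St s) *ᵥ v := by
    intro s hs
    set D : Matrix (Fin (m+1)) (Fin (m+1)) ℂ := s • 1 + X with hD
    have hu : IsUnit D.det := by
      rw [hD, hdet s]
      exact isUnit_iff_ne_zero.mpr hs
    have h1 : D *ᵥ Matrix.cramer D v = D.det • v := Matrix.mulVec_cramer D v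
    have h2 : D *ᵥ ((St s) *ᵥ v) = D.det • v := by
      rw [Matrix.mulVec_mulVec]
      rw [show D * St s = ((-X).charpoly.eval s) • 1 from key_identity X s]
      rw [Matrix.smul_mulVec, Matrix.one_mulVec, hD, hdet s]
    have h3 : D⁻¹ *ᵥ (D *ᵥ Matrix.cramer D v) = D⁻¹ *ᵥ (D *ᵥ ((St s) *ᵥ v)) := by
      rw [h1, h2]
    rwa [Matrix.mulVec_mulVec, Matrix.mulVec_mulVec, Matrix.nonsing_inv_mul D hu,
      Matrix.one_mulVec, Matrix.one_mulVec] at h3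
  -- coefficients vanish
  have hcoeffs : ∀ k : ℕ, u ⬝ᵥ ((Mk k) *ᵥ v) = 0 := by
    have hPzero : (∑ k ∈ Finset.range (m+2),
        Polynomial.C (u ⬝ᵥ ((Mk k) *ᵥ v)) * Polynomial.X ^ k) = 0 := by
      apply Polynomial.eq_zero_of_infinite_isRoot
      have hsub : {s : ℂ | ¬ (-X).charpoly.IsRoot s}
          ⊆ {s : ℂ | Polynomial.IsRoot (∑ k ∈ Finset.range (m+2),
              Polynomial.C (u ⬝ᵥ ((Mk k) *ᵥ v)) * Polynomial.X ^ k) s} := by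
        intro s hs
        have hs' : (-X).charpoly.eval s ≠ 0 := hs
        have heval : Polynomial.eval s (∑ k ∈ Finset.range (m+2),
            Polynomial.C (u ⬝ᵥ ((Mk k) *ᵥ v)) * Polynomial.X ^ k)
            = u ⬝ᵥ ((St s) *ᵥ v) := by
          rw [hSt', Polynomial.eval_finset_sum]
          rw [finset_sum_mulVec, dot_sum]
          apply Finset.sum_congr rfl
          intro k _
          rw [dot_smul_mulVec, Polynomial.eval_mul, Polynomial.eval_C, Polynomial.eval_pow,
            Polynomial.eval_X, mul_comm]
        have : u ⬝ᵥ ((St s) *ᵥ v) = 0 := by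
          rw [← hScr s hs']
          exact h s
        simpa [Polynomial.IsRoot, heval] using this
      apply Set.Infinite.mono hsub
      have hne : (-X).charpoly ≠ 0 := (Matrix.charpoly_monic (-X)).ne_zero
      have := (Polynomial.finite_setOf_isRoot hne).infinite_compl
      simpa [Set.compl_setOf] using this
    intro k
    rcases le_or_gt k (m+1) with hk | hk
    · have := congrArg (fun p => Polynomial.coeff p k) hPzero
      simp only [Polynomial.finset_sum_coeff, Polynomial.coeff_C_mul, Polynomial.coeff_X_pow,
        Polynomial.coeff_zero, mul_ite, mul_one, mul_zero] at this
      rwa [Finset.sum_ite_eq (Finset.range (m+2)) k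
        (fun k => u ⬝ᵥ ((Mk k) *ᵥ v)), if_pos (Finset.mem_range.mpr (by omega))] at this
    · have hempty : m + 1 - k = 0 := by omega
      simp only [hMk, hempty, Finset.range_zero, Finset.sum_empty, Matrix.zero_mulVec,
        dotProduct_zero]
  -- Cayley-Hamilton power reduction
  have cm1 : c (m+1) = 1 := by
    have := (Matrix.charpoly_monic (-X)).coeff_natDegree
    rwa [hdeg'] at this
  have hCH2 : ∑ j ∈ Finset.range (m+2), ((-1:ℂ)^j * c j) • X^j = 0 := by
    have hCH : ∑ j ∈ Finset.range (m+2), c j • (-X)^j = 0 := by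
      have := Matrix.aeval_self_charpoly (-X)
      rwa [Polynomial.aeval_eq_sum_range' hdeg] at this
    rw [← hCH]
    apply Finset.sum_congr rfl
    intro j _
    rw [hnegpow j, smul_smul, mul_comm]
  have hXpow : X^(m+1) = ∑ j ∈ Finset.range (m+1),
      (-((-1:ℂ)^(m+1)) * ((-1:ℂ)^j * c j)) • X^j := by
    rw [Finset.sum_range_succ, cm1, mul_one] at hCH2
    have h5 : ((-1:ℂ)^(m+1)) • X^(m+1)
        = -∑ j ∈ Finset.range (m+1), ((-1:ℂ)^j * c j) • X^j :=
      eq_neg_of_add_eq_zero_right hCH2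
    have h6 := congrArg (fun M : Matrix (Fin (m+1)) (Fin (m+1)) ℂ => ((-1:ℂ)^(m+1)) • M) h5
    simp only [smul_smul, neg_one_sq_pow, one_smul, smul_neg, Finset.smul_sum] at h6
    rw [h6, ← Finset.sum_neg_distrib]
    apply Finset.sum_congr rfl
    intro j _
    rw [← neg_smul, neg_mul]
  -- all iterates are orthogonal to u
  have hphi : ∀ q : ℕ, u ⬝ᵥ ((X^q) *ᵥ v) = 0 := by
    intro q
    induction q using Nat.strong_induction_on with
    | _ q ih =>
      rcases le_or_gt q m with hq | hq
      · have h2 := hcoeffs (m - q)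
        simp only [hMk] at h2
        have hrange : m + 1 - (m - q) = q + 1 := by omega
        rw [hrange] at h2
        have h7 : ∀ i ∈ Finset.range (q+1),
            u ⬝ᵥ (((c (m-q+1+i) • (-X)^i) : Matrix (Fin (m+1)) (Fin (m+1)) ℂ) *ᵥ v)
              = c (m-q+1+i) * (((-1:ℂ)^i) * (u ⬝ᵥ ((X^i) *ᵥ v))) := by
          intro i _
          rw [hnegpow i, smul_smul, dot_smul_mulVec, mul_assoc]
        rw [finset_sum_mulVec, dot_sum, Finset.sum_congr rfl h7, Finset.sum_range_succ] at h2
        have hfirst : ∑ i ∈ Finset.range q,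
            c (m-q+1+i) * (((-1:ℂ)^i) * (u ⬝ᵥ ((X^i) *ᵥ v))) = 0 := by
          apply Finset.sum_eq_zero
          intro i hi
          rw [ih i (Finset.mem_range.mp hi), mul_zero, mul_zero]
        rw [hfirst, zero_add] at h2
        have hmq : m - q + 1 + q = m + 1 := by omega
        rw [hmq, cm1, one_mul] at h2
        exact (mul_eq_zero.mp h2).resolve_left (pow_ne_zero q (by norm_num))
      · have hsplit : X^q = X^(q-(m+1)) * X^(m+1) := by
          rw [← pow_add]
          congr 1
          omega
        rw [hsplit, hXpow, Matrix.mul_sum]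
        have h7 : ∀ j ∈ Finset.range (m+1),
            X^(q-(m+1)) * ((-((-1:ℂ)^(m+1)) * ((-1:ℂ)^j * c j)) • X^j)
              = (-((-1:ℂ)^(m+1)) * ((-1:ℂ)^j * c j)) • X^(q-(m+1)+j) := by
          intro j _
          rw [Matrix.mul_smul, ← pow_add]
        rw [Finset.sum_congr rfl h7, finset_sum_mulVec, dot_sum]
        apply Finset.sum_eq_zero
        intro j hj
        rw [dot_smul_mulVec, ih (q-(m+1)+j) (by
          have := Finset.mem_range.mp hj
          omega), mul_zero]
  -- conclude via the cyclic span
  funext j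
  let f : (Fin (m+1) → ℂ) →ₗ[ℂ] ℂ :=
    { toFun := fun w => u ⬝ᵥ w
      map_add' := fun a b => dotProduct_add u a b
      map_smul' := fun a w => by simp [dotProduct_smul] }
  have hle : Submodule.span ℂ (Set.range fun k : ℕ => (X ^ k) *ᵥ v) ≤ LinearMap.ker f := by
    rw [Submodule.span_le]
    rintro _ ⟨k, rfl⟩
    exact hphi k
  rw [hcyc, top_le_iff] at hle
  have hzero : f (Pi.single j 1) = 0 := by
    rw [← LinearMap.mem_ker, hle]
    trivial
  simpa [f, dotProduct_single] using hzero

/-- If `A` and `B` have equal (non-derogatory) lower-right submatrices `A₁ = B₁`,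
equal first columns `(a_{2,1},…,a_{n,1}) = (b_{2,1},…,b_{n,1})` which form a cyclic
vector of `A₁`, and `π_n(A) = π_n(B)`, then the first rows of `A` and `B` coincide;
in particular `A = B`. -/
theorem stmt19 (n : ℕ) (A B : Matrix (Fin (n+2)) (Fin (n+2)) ℂ)
    (hsub : (fun i j : Fin (n+1) => A i.succ j.succ) = (fun i j => B i.succ j.succ))
    (hcol : (fun i : Fin (n+1) => A i.succ 0) = (fun i => B i.succ 0))
    (hcyc : IsCyclicVec (Matrix.of fun i j : Fin (n+1) => A i.succ j.succ)
      (fun i => A i.succ 0))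
    (hpiX : ∀ j : ℕ, piX A j = piX B j) (hpiY : ∀ j : ℕ, piY A j = piY B j) :
    (∀ k : Fin (n+2), A 0 k = B 0 k) ∧ A = B := by
  classical
  have hrows : ∀ (i j : Fin (n+2)), i ≠ 0 → A i j = B i j := by
    intro i j hi
    obtain ⟨i', rfl⟩ : ∃ i' : Fin (n+1), i = i'.succ :=
      ⟨i.pred hi, (Fin.succ_pred i hi).symm⟩
    cases j using Fin.cases with
    | zero => exact congrFun hcol i'
    | succ j' => exact congrFun (congrFun hsub i') j'
  have hd0 : A 0 0 = B 0 0 := by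
    have := hpiX 1
    rwa [piX_one, piX_one] at this
  have hu0 : (fun j : Fin (n+1) => A 0 j.succ - B 0 j.succ) = 0 := by
    apply u_eq_zero (Matrix.of fun i j : Fin (n+1) => A i.succ j.succ)
      (fun j : Fin (n+1) => A 0 j.succ - B 0 j.succ) (fun i => A i.succ 0) hcyc
    intro t
    have hdetAB := det_t_eq A B hrows hpiX t
    rw [Matrix.det_succ_row_zero, Matrix.det_succ_row_zero] at hdetAB
    have hminor : ∀ j : Fin (n+2),
        ((t • (1 : Matrix (Fin (n+2)) (Fin (n+2)) ℂ) + B).submatrix Fin.succ j.succAbove)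
          = ((t • (1 : Matrix (Fin (n+2)) (Fin (n+2)) ℂ) + A).submatrix Fin.succ
              j.succAbove) := by
      intro j
      ext a b
      simp only [Matrix.submatrix_apply, Matrix.add_apply, Matrix.smul_apply]
      rw [hrows a.succ _ (Fin.succ_ne_zero a)]
    simp only [hminor] at hdetAB
    have hsub2 : ∑ j : Fin (n+2),
        ((-1:ℂ)^(j:ℕ) * ((t • (1 : Matrix (Fin (n+2)) (Fin (n+2)) ℂ) + A) 0 j) *
          ((t • (1 : Matrix (Fin (n+2)) (Fin (n+2)) ℂ) + A).submatrix Fin.succ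
            j.succAbove).det
        - (-1:ℂ)^(j:ℕ) * ((t • (1 : Matrix (Fin (n+2)) (Fin (n+2)) ℂ) + B) 0 j) *
          ((t • (1 : Matrix (Fin (n+2)) (Fin (n+2)) ℂ) + A).submatrix Fin.succ
            j.succAbove).det) = 0 := by
      rw [Finset.sum_sub_distrib, hdetAB, sub_self]
    have hsum : ∑ j : Fin (n+2), (-1:ℂ)^(j:ℕ) * (A 0 j - B 0 j) *
        ((t • (1 : Matrix (Fin (n+2)) (Fin (n+2)) ℂ) + A).submatrix Fin.succ
          j.succAbove).det = 0 := by
      refine Eq.trans (Finset.sum_congr rfl fun j _ => ?_) hsub2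
      simp only [Matrix.add_apply, Matrix.smul_apply, smul_eq_mul]
      ring
    rw [Fin.sum_univ_succ] at hsum
    beta_reduce at hsum
    rw [show A 0 0 - B 0 0 = 0 from sub_eq_zero.mpr hd0] at hsum
    simp only [mul_zero, zero_mul, zero_add] at hsum
    have hfin : ∀ j : Fin (n+1),
        (-1:ℂ)^(((j.succ : Fin (n+2))):ℕ) * (A 0 j.succ - B 0 j.succ) *
          ((t • (1 : Matrix (Fin (n+2)) (Fin (n+2)) ℂ) + A).submatrix Fin.succ
            (j.succ).succAbove).det
        = -((A 0 j.succ - B 0 j.succ) *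
            Matrix.cramer (t • (1 : Matrix (Fin (n+1)) (Fin (n+1)) ℂ) +
              Matrix.of fun i j : Fin (n+1) => A i.succ j.succ) (fun i => A i.succ 0) j) := by
      intro j
      rw [minor_det A t j, Matrix.cramer_apply, Fin.val_succ, pow_succ]
      have hsq := neg_one_sq_pow (j : ℕ)
      linear_combination (-(A 0 j.succ - B 0 j.succ) *
        (((t • (1 : Matrix (Fin (n+1)) (Fin (n+1)) ℂ) +
          Matrix.of fun i j : Fin (n+1) => A i.succ j.succ).updateCol j
            (fun i => A i.succ 0)).det)) * hsq
    rw [Finset.sum_congr rfl fun j _ => hfin j] at hsum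
    rw [Finset.sum_neg_distrib] at hsum
    have hsum2 : ∑ j : Fin (n+1), (A 0 j.succ - B 0 j.succ) *
        Matrix.cramer (t • (1 : Matrix (Fin (n+1)) (Fin (n+1)) ℂ) +
          Matrix.of fun i j : Fin (n+1) => A i.succ j.succ) (fun i => A i.succ 0) j = 0 := by
      have := neg_eq_zero.mp hsum
      exact this
    exact hsum2
  have hrow0 : ∀ k : Fin (n+2), A 0 k = B 0 k := by
    intro k
    cases k using Fin.cases with
    | zero => exact hd0
    | succ k' =>
      have := congrFun hu0 k'
      simpa [sub_eq_zero] using this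
  refine ⟨hrow0, ?_⟩
  ext i j
  rcases eq_or_ne i 0 with rfl | hi
  · exact hrow0 j
  · exact hrows i j hi
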